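/- Assume g : [a,b] → D and F : D → ℝ both have (finite) derivatives almost everywhere, and f = F' almost everywhere on D. Then g'(x) = 0 for almost every x ∈ [a,b] at which the chain-rule equality (F ∘ g)'(x) = f(g(x))·g'(x) fails (i.e. where either side is undefined or the equality is false). -/

import Mathlib

open Set MeasureTheory Filter
open scoped Classical

/-- A tagged partition of `[a, b]`: division points `t 0 = a ≤ t 1 ≤ ⋯ ≤ t n = b`
together with tags `tag i ∈ [t i, t (i+1)]`. -/
structure TaggedPartition (a b : ℝ) where
  n : ℕ
  t : ℕ → ℝ
  tag : ℕ → ℝ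
  t_first : t 0 = a
  t_last : t n = b
  t_mono : ∀ i < n, t i ≤ t (i + 1)
  tag_mem : ∀ i < n, tag i ∈ Set.Icc (t i) (t (i + 1))

/-- A tagged partition is subordinate to a gauge `δ` if each interval is contained in the
open ball of radius `δ` around its tag. -/
def TaggedPartition.Subordinate {a b : ℝ} (P : TaggedPartition a b) (δ : ℝ → ℝ) : Prop :=
  ∀ i < P.n,
    Set.Icc (P.t i) (P.t (i + 1)) ⊆ Set.Ioo (P.tag i - δ (P.tag i)) (P.tag i + δ (P.tag i))

/-- A gauge on `[a, b]` is positive on `[a, b]`. -/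
def IsGauge (a b : ℝ) (δ : ℝ → ℝ) : Prop := ∀ x ∈ Set.Icc a b, 0 < δ x

/-- `f` has negligible variation on `E ⊆ [a, b]`. -/

def NegVar (a b : ℝ) (f : ℝ → ℝ) (E : Set ℝ) : Prop :=
  ∀ ε > 0, ∃ δ : ℝ → ℝ, IsGauge a b δ ∧ ∀ P : TaggedPartition a b, P.Subordinate δ →
    (∑ i ∈ Finset.range P.n,
      if P.tag i ∈ E then |f (P.t (i + 1)) - f (P.t i)| else 0) < ε

/-- `f` has negligible conditional variation on `E ⊆ [a, b]`. -/

def NegCondVar (a b : ℝ) (f : ℝ → ℝ) (E : Set ℝ) : Prop :=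
  ∀ ε > 0, ∃ δ : ℝ → ℝ, IsGauge a b δ ∧ ∀ P : TaggedPartition a b, P.Subordinate δ →
    |∑ i ∈ Finset.range P.n,
      if P.tag i ∈ E then f (P.t (i + 1)) - f (P.t i) else 0| < ε

/-- `I` is the Henstock–Kurzweil integral of `h` on `[a, b]` (with `a ≤ b`). -/
def HKIntegralTo (a b : ℝ) (h : ℝ → ℝ) (I : ℝ) : Prop :=
  ∀ ε > 0, ∃ δ : ℝ → ℝ, IsGauge a b δ ∧ ∀ P : TaggedPartition a b, P.Subordinate δ →
    |(∑ i ∈ Finset.range P.n, h (P.tag i) * (P.t (i + 1) - P.t i)) - I| < ε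

/-- Oriented HK integral: `(HK)∫_a^b h = I`, with the convention
`(HK)∫_b^a h = -(HK)∫_a^b h`. -/
def HKIntegral (a b : ℝ) (h : ℝ → ℝ) (I : ℝ) : Prop :=
  if a ≤ b then HKIntegralTo a b h I else HKIntegralTo b a h (-I)

open scoped NNReal ENNReal

def gpiece (g : ℝ → ℝ) (N0 : Set ℝ) (n m : ℕ) (j : ℤ) : Set ℝ :=
  {x | g x ∈ N0 ∧ (∀ y, |y - x| < 1/(m+1) → (1/(n+1)) * |y - x| ≤ |g y - g x|) ∧
    x ∈ Set.Ico ((j : ℝ)/(m+1)) ((j+1 : ℝ)/(m+1))}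

lemma gpiece_null (g : ℝ → ℝ) (N0 : Set ℝ) (hN0 : volume N0 = 0) (n m : ℕ) (j : ℤ) :
    volume (gpiece g N0 n m j) = 0 := by
  set U := gpiece g N0 n m j with hU
  set h : ℝ → ℝ := Function.invFunOn g U with hh
  have hdistU : ∀ x ∈ U, ∀ x' ∈ U, |x - x'| < 1/(m+1) := by
    intro x hx x' hx'
    have h1 := hx.2.2
    have h2 := hx'.2.2
    have hm : (0:ℝ) < (m:ℝ)+1 := by positivity
    have e1 : ((j:ℝ)+1)/(m+1) - (j:ℝ)/(m+1) = 1/(m+1) := by field_simp; ring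
    rw [abs_sub_lt_iff]
    constructor <;> linarith [h1.1, h1.2, h2.1, h2.2]
  have hlow : ∀ x ∈ U, ∀ x' ∈ U, (1/(n+1:ℝ)) * |x' - x| ≤ |g x' - g x| := by
    intro x hx x' hx'
    exact hx.2.1 x' (by simpa [abs_sub_comm] using hdistU x hx x' hx')
  have hinj : ∀ x ∈ U, ∀ x' ∈ U, g x = g x' → x = x' := by
    intro x hx x' hx' hgxx
    have hb := hlow x hx x' hx'
    rw [hgxx, sub_self, abs_zero] at hb
    have hn : (0:ℝ) < 1/((n:ℝ)+1) := by positivity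
    have h0 : |x' - x| ≤ 0 := by nlinarith [abs_nonneg (x' - x)]
    have := abs_nonneg (x' - x)
    have : x' - x = 0 := abs_eq_zero.mp (le_antisymm h0 this)
    linarith [this]
  have hhg : ∀ x ∈ U, h (g x) = x := by
    intro x hx
    have h1 : h (g x) ∈ U := Function.invFunOn_mem ⟨x, hx, rfl⟩
    have h2 : g (h (g x)) = g x := Function.invFunOn_eq ⟨x, hx, rfl⟩
    exact (hinj x hx _ h1 h2.symm).symm
  have hsub : U ⊆ h '' (g '' U) := by
    intro x hx
    exact ⟨g x, ⟨x, hx, rfl⟩, hhg x hx⟩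
  have hlip : LipschitzOnWith ((n:ℝ≥0)+1) h (g '' U) := by
    apply LipschitzOnWith.of_dist_le_mul
    rintro y ⟨x, hx, rfl⟩ y' ⟨x', hx', rfl⟩
    rw [hhg x hx, hhg x' hx']
    have hb := hlow x' hx' x hx
    have hn : (0:ℝ) < 1/((n:ℝ)+1) := by positivity
    simp only [Real.dist_eq]
    have hc : (((n:ℝ≥0)+1 : ℝ≥0) : ℝ) = (n:ℝ)+1 := by push_cast; ring
    rw [hc]
    calc |x - x'| = ((n:ℝ)+1) * ((1/((n:ℝ)+1)) * |x - x'|) := by field_simp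
      _ ≤ ((n:ℝ)+1) * |g x - g x'| :=
          mul_le_mul_of_nonneg_left hb (by positivity)
  have himg : volume (g '' U) = 0 :=
    measure_mono_null (image_subset_iff.mpr (fun x hx => hx.1)) hN0
  have : volume (h '' (g '' U)) = 0 := by
    rw [← MeasureTheory.hausdorffMeasure_real] at himg ⊢
    refine le_antisymm ?_ zero_le
    calc μH[1] (h '' (g '' U)) ≤ (((n:ℝ≥0)+1 : ℝ≥0) : ℝ≥0∞) ^ (1:ℝ) * μH[1] (g '' U) :=
          hlip.hausdorffMeasure_image_le zero_le_one
      _ = 0 := by rw [himg, mul_zero]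
  exact measure_mono_null hsub this

lemma key_null (g : ℝ → ℝ) (N0 : Set ℝ) (hN0 : volume N0 = 0) :
    volume {x | g x ∈ N0 ∧ ∃ L, L ≠ 0 ∧ HasDerivAt g L x} = 0 := by
  apply measure_mono_null (t := ⋃ (n : ℕ) (m : ℕ) (j : ℤ), gpiece g N0 n m j)
  · rintro x ⟨hgx, L, hL0, hL⟩
    have habs : 0 < |L| := abs_pos.mpr hL0
    obtain ⟨n, hn⟩ := exists_nat_gt (2/|L|)
    have hn2 : 1/((n:ℝ)+1) ≤ |L|/2 := by
      rw [div_le_div_iff₀ (by positivity) (by norm_num)]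
      have : 2/|L| < (n:ℝ)+1 := hn.trans (by linarith)
      calc (1:ℝ)*2 = 2 := by ring
        _ = (2/|L|) * |L| := by field_simp
        _ ≤ |L| * ((n:ℝ)+1) := by nlinarith
    -- from the derivative: eventually |g y - g x - L (y-x)| ≤ |L|/2 |y - x|
    have hev : ∀ᶠ y in nhds x, |g y - g x - L * (y - x)| ≤ |L|/2 * |y - x| := by
      have := hL.isLittleO.def (half_pos habs)
      simpa [Real.norm_eq_abs, smul_eq_mul, mul_comm] using this
    obtain ⟨r, hr, hball⟩ := Metric.eventually_nhds_iff.mp hev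
    obtain ⟨m, hm⟩ := exists_nat_gt (1/r)
    have hm2 : 1/((m:ℝ)+1) < r := by
      rw [div_lt_iff₀ (by positivity)]
      have h1 : 1/r < (m:ℝ)+1 := hm.trans (by linarith)
      calc (1:ℝ) = (1/r) * r := by field_simp
        _ < r * ((m:ℝ)+1) := by nlinarith
    refine mem_iUnion.mpr ⟨n, mem_iUnion.mpr ⟨m, mem_iUnion.mpr ⟨⌊x * ((m:ℝ)+1)⌋, ?_⟩⟩⟩
    refine ⟨hgx, ?_, ?_⟩
    · intro y hy
      have hy' : dist y x < r := by rw [Real.dist_eq]; exact hy.trans hm2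
      have h1 := hball hy'
      have h2 : |L * (y - x)| - |g y - g x| ≤ |g y - g x - L * (y - x)| := by
        have := abs_sub_abs_le_abs_sub (L * (y - x)) (g y - g x)
        calc |L * (y-x)| - |g y - g x| ≤ |L * (y-x) - (g y - g x)| := this
          _ = |g y - g x - L * (y - x)| := by rw [abs_sub_comm]
      rw [abs_mul] at h2
      have : |L|/2 * |y - x| ≤ |g y - g x| := by linarith
      calc (1/((n:ℝ)+1)) * |y - x| ≤ |L|/2 * |y - x| :=
            mul_le_mul_of_nonneg_right hn2 (abs_nonneg _)
        _ ≤ |g y - g x| := this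
    · have hmpos : (0:ℝ) < (m:ℝ)+1 := by positivity
      constructor
      · rw [div_le_iff₀ hmpos]
        calc ((⌊x*((m:ℝ)+1)⌋ : ℝ)) ≤ x*((m:ℝ)+1) := Int.floor_le _
          _ = x * ((m:ℝ)+1) := rfl
      · rw [lt_div_iff₀ hmpos]
        have := Int.lt_floor_add_one (x * ((m:ℝ)+1))
        push_cast
        linarith
  · exact measure_iUnion_null fun n => measure_iUnion_null fun m =>
      measure_iUnion_null fun j => gpiece_null g N0 hN0 n m j


/-- `g' = 0` a.e. at the points where the chain rule
`(F ∘ g)' = (f ∘ g) · g'` fails. -/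
theorem stmt1 (a b : ℝ) (D : Set ℝ) (g F f : ℝ → ℝ)
    (hD : Set.MapsTo g (Set.Icc a b) D)
    (hg : ∀ᵐ x ∂(MeasureTheory.volume.restrict (Set.Icc a b)), DifferentiableAt ℝ g x)
    (hF : ∀ᵐ x ∂(MeasureTheory.volume.restrict D), DifferentiableAt ℝ F x)
    (hf : ∀ᵐ x ∂(MeasureTheory.volume.restrict D), deriv F x = f x) :
    MeasureTheory.volume {x ∈ Set.Icc a b |
      (¬ ∃ L : ℝ, HasDerivAt g L x ∧ HasDerivAt (F ∘ g) (f (g x) * L) x) ∧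
      ¬ HasDerivAt g 0 x} = 0 := by
  have hgnull : volume ({x | ¬ DifferentiableAt ℝ g x} ∩ Set.Icc a b) = 0 := by
    have h1 := ae_iff.mp hg
    rwa [Measure.restrict_apply' measurableSet_Icc] at h1
  have hFf := hF.and hf
  have h2 := ae_iff.mp hFf
  obtain ⟨t, hsubt, htm, ht0⟩ := exists_measurable_superset_of_null h2
  have hN0 : volume (t ∩ D) = 0 := by
    rwa [Measure.restrict_apply htm] at ht0
  apply measure_mono_null (t := ({x | ¬ DifferentiableAt ℝ g x} ∩ Set.Icc a b) ∪
    {x | g x ∈ t ∩ D ∧ ∃ L, L ≠ 0 ∧ HasDerivAt g L x})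
  · rintro x ⟨hxab, hfail, hnz⟩
    by_cases hdiff : DifferentiableAt ℝ g x
    · right
      have hd := hdiff.hasDerivAt
      have hLne : deriv g x ≠ 0 := fun h0 => hnz (h0 ▸ hd)
      refine ⟨?_, deriv g x, hLne, hd⟩
      by_contra hgx
      have hDx := hD hxab
      have hgt : g x ∉ t := fun h => hgx ⟨h, hDx⟩
      have hok : DifferentiableAt ℝ F (g x) ∧ deriv F (g x) = f (g x) := by
        by_contra hk
        exact hgt (hsubt (by simpa using hk))
      refine hfail ⟨deriv g x, hd, ?_⟩
      have hc := (hok.1.hasDerivAt).comp x hd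
      rwa [hok.2] at hc
    · exact Or.inl ⟨hdiff, hxab⟩
  · exact measure_union_null hgnull (key_null g (t ∩ D) hN0)
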